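/- Let M ∈ U(2,1;O₁₁) fix q∞, i.e. M·(1,0,0)ᵗ is a complex scalar multiple of (1,0,0)ᵗ. Then M or −M lies in the subgroup of GL(3,ℂ) generated by the four matrices R₁, R₂, R₃, T. Equivalently, the stabiliser of q∞ in PU(2,1;O₁₁) = U(2,1;O₁₁)/{±I} is generated by the classes of R₁, R₂, R₃ and T. -/

import Mathlib

noncomputable section

open Matrix Complex

/-- The Gram matrix `J` of the Hermitian form of signature (2,1). -/
def Jmat : Matrix (Fin 3) (Fin 3) ℂ := !![0,0,1; 0,1,0; 1,0,0]

lemma Jmat_mul_Jmat : Jmat * Jmat = 1 := by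
  simp [Jmat, Matrix.mul_fin_three, Matrix.one_fin_three]

/-- A matrix satisfying `Mᴴ J M = J`, viewed as an element of `GL (Fin 3) ℂ`. -/
def toGL (M : Matrix (Fin 3) (Fin 3) ℂ) (h : Mᴴ * Jmat * M = Jmat) : GL (Fin 3) ℂ where
  val := M
  inv := Jmat * Mᴴ * Jmat
  inv_val := by
    calc (Jmat * Mᴴ * Jmat) * M = Jmat * (Mᴴ * Jmat * M) := by
          simp only [Matrix.mul_assoc]
    _ = 1 := by rw [h, Jmat_mul_Jmat]
  val_inv := by
    apply mul_eq_one_comm.mp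
    calc (Jmat * Mᴴ * Jmat) * M = Jmat * (Mᴴ * Jmat * M) := by
          simp only [Matrix.mul_assoc]
    _ = 1 := by rw [h, Jmat_mul_Jmat]

/-- `ω₁₁ = (1 + i√11)/2`. -/
def ω : ℂ := (1 + Complex.I * (√11 : ℝ)) / 2

/-- The ring of integers `O₁₁ = ℤ[ω₁₁]` of `ℚ(√-11)`, as a subset of `ℂ`. -/
def O11 : Set ℂ := {z | ∃ a b : ℤ, z = (a : ℂ) + (b : ℂ) * ω}

def I₀ : Matrix (Fin 3) (Fin 3) ℂ := !![0,0,1; 0,-1,0; 1,0,0]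

def R₁ : Matrix (Fin 3) (Fin 3) ℂ := !![1,0,0; 0,-1,0; 0,0,1]

def R₂ : Matrix (Fin 3) (Fin 3) ℂ := !![1, 1, -((starRingEnd ℂ) ω); 0,-1,1; 0,0,1]

def R₃ : Matrix (Fin 3) (Fin 3) ℂ :=
  !![1, (starRingEnd ℂ) ω, -1 - (starRingEnd ℂ) ω; 0, -1, ω; 0,0,1]

def T : Matrix (Fin 3) (Fin 3) ℂ := !![1, 0, Complex.I*(√11:ℝ); 0,1,0; 0,0,1]

lemma hI₀ : I₀ᴴ * Jmat * I₀ = Jmat := by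
  ext i j
  fin_cases i <;> fin_cases j <;>
    simp [Matrix.mul_apply, Fin.sum_univ_three, Jmat, I₀, Matrix.conjTranspose_apply,
      Matrix.vecHead, Matrix.vecTail]

lemma hR₁ : R₁ᴴ * Jmat * R₁ = Jmat := by
  ext i j
  fin_cases i <;> fin_cases j <;>
    simp [Matrix.mul_apply, Fin.sum_univ_three, Jmat, R₁, Matrix.conjTranspose_apply,
      Matrix.vecHead, Matrix.vecTail]

lemma hR₂ : R₂ᴴ * Jmat * R₂ = Jmat := by
  ext i j
  fin_cases i <;> fin_cases j <;>
    simp [Matrix.mul_apply, Fin.sum_univ_three, Jmat, R₂, ω, Matrix.conjTranspose_apply,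
      Matrix.vecHead, Matrix.vecTail] <;>
    ring_nf <;>
    simp [Complex.ext_iff, ← Complex.ofReal_pow, Real.sq_sqrt] <;>
    ring_nf

lemma hR₃ : R₃ᴴ * Jmat * R₃ = Jmat := by
  ext i j
  fin_cases i <;> fin_cases j <;>
    simp [Matrix.mul_apply, Fin.sum_univ_three, Jmat, R₃, ω, Matrix.conjTranspose_apply,
      Matrix.vecHead, Matrix.vecTail] <;>
    ring_nf <;>
    simp [Complex.ext_iff, ← Complex.ofReal_pow, Real.sq_sqrt] <;>
    ring_nf <;>
    simp

lemma hT : Tᴴ * Jmat * T = Jmat := by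
  ext i j
  fin_cases i <;> fin_cases j <;>
    simp [Matrix.mul_apply, Fin.sum_univ_three, Jmat, T, Matrix.conjTranspose_apply,
      Matrix.vecHead, Matrix.vecTail]

lemma omega_conj : (starRingEnd ℂ) ω = 1 - ω := by
  simp [ω, Complex.ext_iff, Complex.div_re, Complex.div_im]
  norm_num
  ring

lemma sqrt11_sq : ((Real.sqrt 11 : ℝ) : ℂ) ^ 2 = 11 := by
  rw [← Complex.ofReal_pow]
  norm_num [Real.sq_sqrt (by norm_num : (0:ℝ) ≤ 11)]

lemma omega_sq : ω * ω = ω - 3 := by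
  have h := sqrt11_sq
  rw [ω]
  have hI := Complex.I_sq
  field_simp
  linear_combination 11*hI + Complex.I^2*h

lemma isqrt11 : Complex.I * ((√11 : ℝ) : ℂ) = 2 * ω - 1 := by
  rw [ω]; ring

lemma O11_mk (a b : ℤ) : ((a:ℂ) + (b:ℂ) * ω) ∈ O11 := ⟨a, b, rfl⟩

lemma O11_zero : (0:ℂ) ∈ O11 := ⟨0, 0, by simp⟩
lemma O11_one : (1:ℂ) ∈ O11 := ⟨1, 0, by simp⟩

lemma O11_add {z w : ℂ} (hz : z ∈ O11) (hw : w ∈ O11) : z + w ∈ O11 := by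
  obtain ⟨a, b, rfl⟩ := hz; obtain ⟨c, d, rfl⟩ := hw
  exact ⟨a + c, b + d, by push_cast; ring⟩

lemma O11_neg {z : ℂ} (hz : z ∈ O11) : -z ∈ O11 := by
  obtain ⟨a, b, rfl⟩ := hz
  exact ⟨-a, -b, by push_cast; ring⟩

lemma O11_sub {z w : ℂ} (hz : z ∈ O11) (hw : w ∈ O11) : z - w ∈ O11 := by
  rw [sub_eq_add_neg]; exact O11_add hz (O11_neg hw)

lemma O11_mul {z w : ℂ} (hz : z ∈ O11) (hw : w ∈ O11) : z * w ∈ O11 := by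
  obtain ⟨a, b, rfl⟩ := hz; obtain ⟨c, d, rfl⟩ := hw
  refine ⟨a * c - 3 * (b * d), a * d + b * c + b * d, ?_⟩
  push_cast
  linear_combination ((b:ℂ) * d) * omega_sq

lemma O11_conj {z : ℂ} (hz : z ∈ O11) : (starRingEnd ℂ) z ∈ O11 := by
  obtain ⟨a, b, rfl⟩ := hz
  refine ⟨a + b, -b, ?_⟩
  simp only [_root_.map_add, _root_.map_mul, map_intCast, omega_conj]
  push_cast
  ring

/-- the norm of an element of O11 is an integer -/
lemma O11_norm (a b : ℤ) :
    ((a:ℂ) + (b:ℂ) * ω) * (starRingEnd ℂ) ((a:ℂ) + (b:ℂ) * ω)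
      = ((a*a + a*b + 3*(b*b) : ℤ) : ℂ) := by
  simp only [_root_.map_add, _root_.map_mul, map_intCast, omega_conj]
  push_cast
  linear_combination (-((b:ℂ))^2) * omega_sq

/-- units of O11 under conj z * w = 1 -/
lemma O11_unit {z w : ℂ} (hz : z ∈ O11) (hw : w ∈ O11)
    (h : (starRingEnd ℂ) z * w = 1) : (z = 1 ∧ w = 1) ∨ (z = -1 ∧ w = -1) := by
  obtain ⟨a, b, hzab⟩ := hz
  obtain ⟨c, d, hwcd⟩ := hw
  have h' : z * (starRingEnd ℂ) w = 1 := by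
    have := congrArg (starRingEnd ℂ) h
    simpa [_root_.map_mul] using this
  have hnn : ((a*a + a*b + 3*(b*b) : ℤ) : ℂ) * ((c*c + c*d + 3*(d*d) : ℤ) : ℂ) = 1 := by
    rw [← O11_norm a b, ← O11_norm c d, ← hzab, ← hwcd]
    calc z * (starRingEnd ℂ) z * (w * (starRingEnd ℂ) w)
        = ((starRingEnd ℂ) z * w) * (z * (starRingEnd ℂ) w) := by ring
      _ = 1 := by rw [h, h']; ring
  have hint : (a*a + a*b + 3*(b*b)) * (c*c + c*d + 3*(d*d)) = 1 := by
    exact_mod_cast hnn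
  have hX : 0 ≤ a*a + a*b + 3*(b*b) := by nlinarith [sq_nonneg (2*a+b), sq_nonneg b]
  have h1 : a*a + a*b + 3*(b*b) = 1 := by
    rcases Int.eq_one_or_neg_one_of_mul_eq_one hint with h1 | h1
    · exact h1
    · omega
  have hb : b = 0 := by nlinarith [sq_nonneg (2*a+b), sq_nonneg b]
  subst hb
  have ha : a = 1 ∨ a = -1 := by
    rcases Int.isUnit_iff.mp (IsUnit.of_mul_eq_one (a := a) a (by linarith [h1])) with h | h
    · exact Or.inl h
    · exact Or.inr h
  have hz1 : z = (a:ℂ) := by rw [hzab]; push_cast; ring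
  rcases ha with ha | ha <;> subst ha
  · left
    have hz2 : z = 1 := by rw [hz1]; norm_num
    refine ⟨hz2, ?_⟩
    rw [hz2] at h
    simpa using h
  · right
    have hz2 : z = -1 := by rw [hz1]; norm_num
    refine ⟨hz2, ?_⟩
    rw [hz2, show (starRingEnd ℂ) (-1 : ℂ) = -1 from by simp] at h
    linear_combination -h

/-- purely imaginary elements of O11 -/
lemma O11_imag {z : ℂ} (hz : z ∈ O11) (h : z + (starRingEnd ℂ) z = 0) :
    ∃ k : ℤ, z = (k:ℂ) * (2 * ω - 1) := by
  obtain ⟨a, b, rfl⟩ := hz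
  simp only [_root_.map_add, _root_.map_mul, map_intCast, omega_conj] at h
  have h2 : ((2*a + b : ℤ) : ℂ) = 0 := by push_cast; linear_combination h
  have h3 : 2*a + b = 0 := by exact_mod_cast h2
  refine ⟨-a, ?_⟩
  have hb : b = -2*a := by omega
  subst hb
  push_cast
  ring

/-- Heisenberg-type upper triangular matrices -/
def Nmat (b c : ℂ) : Matrix (Fin 3) (Fin 3) ℂ :=
  !![1, b, c; 0, 1, -(starRingEnd ℂ) b; 0, 0, 1]

lemma Nmat_mul (b c b' c' : ℂ) :
    Nmat b c * Nmat b' c' = Nmat (b + b') (c + c' - b * (starRingEnd ℂ) b') := by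
  ext i j
  fin_cases i <;> fin_cases j <;>
    simp [Nmat, Matrix.mul_apply, Fin.sum_univ_three, Matrix.vecHead, Matrix.vecTail] <;> ring

lemma Nmat_zero : Nmat 0 0 = 1 := by
  ext i j
  fin_cases i <;> fin_cases j <;> simp [Nmat, Matrix.one_fin_three, Matrix.vecHead, Matrix.vecTail]

/-- the generating set -/
def genS : Set (GL (Fin 3) ℂ) := {toGL R₁ hR₁, toGL R₂ hR₂, toGL R₃ hR₃, toGL T hT}

/-- matrices realized by elements of the subgroup generated by the four generators -/
def Mset : Set (Matrix (Fin 3) (Fin 3) ℂ) :=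
  {W | ∃ U ∈ Subgroup.closure genS, (U : Matrix (Fin 3) (Fin 3) ℂ) = W}

lemma Mset_one : (1 : Matrix (Fin 3) (Fin 3) ℂ) ∈ Mset :=
  ⟨1, Subgroup.one_mem _, rfl⟩

lemma Mset_mul {W W' : Matrix (Fin 3) (Fin 3) ℂ} (h : W ∈ Mset) (h' : W' ∈ Mset) :
    W * W' ∈ Mset := by
  obtain ⟨U, hU, rfl⟩ := h
  obtain ⟨U', hU', rfl⟩ := h'
  exact ⟨U * U', Subgroup.mul_mem _ hU hU', rfl⟩

lemma Mset_inv {W W' : Matrix (Fin 3) (Fin 3) ℂ} (h : W ∈ Mset) (hWW' : W * W' = 1) :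
    W' ∈ Mset := by
  obtain ⟨U, hU, rfl⟩ := h
  refine ⟨U⁻¹, Subgroup.inv_mem _ hU, ?_⟩
  have h1 : (↑(U⁻¹) : Matrix (Fin 3) (Fin 3) ℂ) * (U : Matrix (Fin 3) (Fin 3) ℂ) = 1 := by
    exact U.inv_mul
  calc (↑(U⁻¹) : Matrix (Fin 3) (Fin 3) ℂ)
      = ↑(U⁻¹) * ((U : Matrix (Fin 3) (Fin 3) ℂ) * W') := by rw [hWW', mul_one]
    _ = (↑(U⁻¹) * (U : Matrix (Fin 3) (Fin 3) ℂ)) * W' := by rw [Matrix.mul_assoc]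
    _ = W' := by rw [h1, Matrix.one_mul]

lemma Mset_R₁ : R₁ ∈ Mset :=
  ⟨toGL R₁ hR₁, Subgroup.subset_closure (by simp [genS]), rfl⟩
lemma Mset_R₂ : R₂ ∈ Mset :=
  ⟨toGL R₂ hR₂, Subgroup.subset_closure (by simp [genS]), rfl⟩
lemma Mset_R₃ : R₃ ∈ Mset :=
  ⟨toGL R₃ hR₃, Subgroup.subset_closure (by simp [genS]), rfl⟩
lemma Mset_T : T ∈ Mset :=
  ⟨toGL T hT, Subgroup.subset_closure (by simp [genS]), rfl⟩

lemma T_eq : T = Nmat 0 (2 * ω - 1) := by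
  ext i j
  fin_cases i <;> fin_cases j <;>
    first
    | rfl
    | (simp [T, Nmat, isqrt11, Matrix.vecHead, Matrix.vecTail])

lemma A_eq : R₁ * R₂ = Nmat 1 (ω - 1) := by
  ext i j
  fin_cases i <;> fin_cases j <;>
    first
    | rfl
    | (simp [R₁, R₂, Nmat, Matrix.mul_apply, Fin.sum_univ_three, omega_conj,
        Matrix.vecHead, Matrix.vecTail])

lemma B_eq : R₁ * R₃ = Nmat (1 - ω) (ω - 2) := by
  ext i j
  fin_cases i <;> fin_cases j <;>
    first
    | rfl
    | (simp [R₁, R₃, Nmat, Matrix.mul_apply, Fin.sum_univ_three, omega_conj, map_sub,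
        Matrix.vecHead, Matrix.vecTail]
       try ring)

lemma Mset_A : Nmat 1 (ω - 1) ∈ Mset := A_eq ▸ Mset_mul Mset_R₁ Mset_R₂
lemma Mset_B : Nmat (1 - ω) (ω - 2) ∈ Mset := B_eq ▸ Mset_mul Mset_R₁ Mset_R₃

lemma Mset_Ainv : Nmat (-1) (-ω) ∈ Mset := by
  refine Mset_inv Mset_A ?_
  rw [Nmat_mul, show (1:ℂ) + -1 = 0 by ring, show ω - 1 + -ω - 1 * (starRingEnd ℂ) (-1) = 0 from by simp; ring, Nmat_zero]

lemma Mset_Binv : Nmat (ω - 1) (-1 - ω) ∈ Mset := by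
  refine Mset_inv Mset_B ?_
  rw [Nmat_mul]
  rw [show (1:ℂ) - ω + (ω - 1) = 0 by ring]
  have hc : (starRingEnd ℂ) (ω - 1) = -ω := by
    rw [map_sub, omega_conj]; simp
  rw [show ω - 2 + (-1 - ω) - (1 - ω) * (starRingEnd ℂ) (ω - 1) = 0 from by
    rw [hc]; linear_combination -omega_sq, Nmat_zero]

lemma Mset_Tinv : Nmat 0 (1 - 2*ω) ∈ Mset := by
  refine Mset_inv (T_eq ▸ Mset_T) ?_
  rw [Nmat_mul, show (0:ℂ) + 0 = 0 by ring,
    show (2*ω - 1) + (1 - 2*ω) - 0 * (starRingEnd ℂ) 0 = 0 from by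
      rw [_root_.map_zero]; ring, Nmat_zero]

lemma Mset_Tpow : ∀ k : ℤ, Nmat 0 ((k:ℂ) * (2*ω - 1)) ∈ Mset := by
  intro k
  induction k using Int.induction_on with
  | zero => simpa [Nmat_zero] using Mset_one
  | succ n ih =>
      have h := Mset_mul ih (T_eq ▸ Mset_T)
      rw [Nmat_mul, show (0:ℂ) + 0 = 0 by ring,
        show ((n:ℤ):ℂ)*(2*ω-1) + (2*ω-1) - 0 * (starRingEnd ℂ) 0 = (((n:ℤ):ℂ)+1)*(2*ω-1) from by
          rw [_root_.map_zero]; ring] at h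
      convert h using 3
      push_cast; ring
  | pred n ih =>
      have h := Mset_mul ih Mset_Tinv
      rw [Nmat_mul, show (0:ℂ) + 0 = 0 by ring,
        show ((-n:ℤ):ℂ)*(2*ω-1) + (1-2*ω) - 0 * (starRingEnd ℂ) 0 = (-(n:ℂ)-1)*(2*ω-1) from by
          rw [_root_.map_zero]; push_cast; ring] at h
      convert h using 3
      push_cast; ring

def Pb (b : ℂ) : Prop :=
  b ∈ O11 ∧ ∃ c, c ∈ O11 ∧
    c + (starRingEnd ℂ) c = -(b * (starRingEnd ℂ) b) ∧ Nmat b c ∈ Mset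

lemma Pb_zero : Pb 0 :=
  ⟨O11_zero, 0, O11_zero, by simp, by rw [Nmat_zero]; exact Mset_one⟩

lemma Pb_one : Pb 1 := by
  refine ⟨O11_one, ω - 1, ⟨-1, 1, by push_cast; ring⟩, ?_, Mset_A⟩
  simp only [map_sub, _root_.map_one, omega_conj, mul_one]
  ring

lemma Pb_negone : Pb (-1) := by
  refine ⟨O11_neg O11_one, -ω, ⟨0, -1, by push_cast; ring⟩, ?_, Mset_Ainv⟩
  simp only [map_neg, _root_.map_one, omega_conj, mul_neg, mul_one, neg_neg]
  ring

lemma Pb_omb : Pb (1 - ω) := by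
  refine ⟨⟨1, -1, by push_cast; ring⟩, ω - 2, ⟨-2, 1, by push_cast; ring⟩, ?_, Mset_B⟩
  simp only [map_sub, _root_.map_one, omega_conj, map_ofNat]
  linear_combination -omega_sq

lemma Pb_negomb : Pb (ω - 1) := by
  refine ⟨⟨-1, 1, by push_cast; ring⟩, -1 - ω, ⟨-1, -1, by push_cast; ring⟩, ?_, Mset_Binv⟩
  simp only [map_sub, map_neg, _root_.map_one, omega_conj]
  linear_combination -omega_sq

lemma Pb_add {b b' : ℂ} (h : Pb b) (h' : Pb b') : Pb (b + b') := by
  obtain ⟨hb, c, hcO, hc, hN⟩ := h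
  obtain ⟨hb', c', hcO', hc', hN'⟩ := h'
  refine ⟨O11_add hb hb', c + c' - b * (starRingEnd ℂ) b',
    O11_sub (O11_add hcO hcO') (O11_mul hb (O11_conj hb')), ?_, ?_⟩
  · simp only [map_add, map_sub, _root_.map_mul, Complex.conj_conj]
    linear_combination hc + hc'
  · rw [← Nmat_mul]
    exact Mset_mul hN hN'

lemma Pb_int : ∀ (n : ℤ) (b : ℂ), Pb b → Pb (-b) → Pb ((n:ℂ) * b) := by
  intro n b hb hnb
  induction n using Int.induction_on with
  | zero => simpa using Pb_zero
  | succ n ih =>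
      have := Pb_add ih hb
      rw [show ((n:ℤ):ℂ) * b + b = (((n+1:ℤ)):ℂ) * b from by push_cast; ring] at this
      exact this
  | pred n ih =>
      have := Pb_add ih hnb
      rw [show ((-n:ℤ):ℂ) * b + -b = ((((-n:ℤ)-1)):ℂ) * b from by push_cast; ring] at this
      convert this using 2
      push_cast
      ring
  
lemma allO11_Pb {b : ℂ} (hb : b ∈ O11) : Pb b := by
  obtain ⟨p, q, rfl⟩ := hb
  have h : ((p:ℂ) + (q:ℂ) * ω)
      = ((p + q : ℤ):ℂ) * 1 + ((-q : ℤ):ℂ) * (1 - ω) := by push_cast; ring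
  rw [h]
  refine Pb_add (Pb_int _ _ Pb_one Pb_negone) (Pb_int _ _ Pb_omb ?_)
  rw [show -(1 - ω) = ω - 1 from by ring]
  exact Pb_negomb

lemma key_mem {b c : ℂ} (hb : b ∈ O11) (hc : c ∈ O11)
    (hcon : c + (starRingEnd ℂ) c = -(b * (starRingEnd ℂ) b)) : Nmat b c ∈ Mset := by
  obtain ⟨-, c₀, hc₀O, hc₀, hN⟩ := allO11_Pb hb
  have hd : (c - c₀) + (starRingEnd ℂ) (c - c₀) = 0 := by
    simp only [map_sub]
    linear_combination hcon - hc₀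
  obtain ⟨k, hk⟩ := O11_imag (O11_sub hc hc₀O) hd
  have h := Mset_mul hN (Mset_Tpow k)
  rw [Nmat_mul, show b + 0 = b from by ring,
    show c₀ + (k:ℂ) * (2*ω - 1) - b * (starRingEnd ℂ) 0 = c from by
      rw [_root_.map_zero, ← hk]; ring] at h
  exact h

/-- **Generators of the stabiliser of `q∞` in `PU(2,1;O11)`**: every matrix
`M ∈ U(2,1;O11)` fixing `q∞` (i.e. mapping `(1,0,0)ᵗ` to a scalar multiple of itself)
agrees, up to sign, with an element of the subgroup of `GL(3,ℂ)` generated by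
`R₁, R₂, R₃, T`. -/
theorem stabiliser_O11_generated
    (M : Matrix (Fin 3) (Fin 3) ℂ)
    (hM : ∀ i j, M i j ∈ O11)
    (hU : Mᴴ * Jmat * M = Jmat)
    (hfix : ∃ c : ℂ, M.mulVec ![1,0,0] = c • ![1,0,0]) :
    ∃ U ∈ Subgroup.closure
        ({toGL R₁ hR₁, toGL R₂ hR₂, toGL R₃ hR₃, toGL T hT} :
          Set (GL (Fin 3) ℂ)),
      (U : Matrix (Fin 3) (Fin 3) ℂ) = M ∨ (U : Matrix (Fin 3) (Fin 3) ℂ) = -M := by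
  have c1 : (starRingEnd ℂ) (1:ℂ) = 1 := by simp
  have cm1 : (starRingEnd ℂ) (-1:ℂ) = -1 := by simp
  obtain ⟨sc, hsc⟩ := hfix
  have h10 : M 1 0 = 0 := by
    have := congrFun hsc 1
    simpa [Matrix.mulVec, dotProduct, Fin.sum_univ_three] using this
  have h20 : M 2 0 = 0 := by
    have := congrFun hsc 2
    simpa [Matrix.mulVec, dotProduct, Fin.sum_univ_three] using this
  have e01 := congrFun (congrFun hU 0) 1
  have e02 := congrFun (congrFun hU 0) 2
  have e11 := congrFun (congrFun hU 1) 1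
  have e12 := congrFun (congrFun hU 1) 2
  have e22 := congrFun (congrFun hU 2) 2
  simp [Matrix.mul_apply, Fin.sum_univ_three, Jmat, Matrix.conjTranspose_apply,
    h10, h20, Complex.star_def, Matrix.vecHead, Matrix.vecTail] at e01 e02 e11 e12 e22
  rcases O11_unit (hM 0 0) (hM 2 2) e02 with ⟨ha, hF⟩ | ⟨ha, hF⟩
  · -- M 0 0 = 1, M 2 2 = 1
    have h21 : M 2 1 = 0 := by
      rcases e01 with h | h
      · rw [ha] at h; exact absurd h one_ne_zero
      · exact h
    rw [h21] at e11 e12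
    simp only [_root_.map_zero, mul_zero, zero_mul, add_zero, zero_add] at e11 e12
    rcases O11_unit (hM 1 1) (hM 1 1) e11 with ⟨hD, -⟩ | ⟨hD, -⟩
    · -- M 1 1 = 1
      have hE : M 1 2 = -(starRingEnd ℂ) (M 0 1) := by
        rw [hD, hF, c1] at e12
        linear_combination e12
      have hcon : M 0 2 + (starRingEnd ℂ) (M 0 2)
          = -(M 0 1 * (starRingEnd ℂ) (M 0 1)) := by
        rw [hF, hE, c1] at e22
        simp only [map_neg, Complex.conj_conj, one_mul, mul_one] at e22
        linear_combination e22
      obtain ⟨U, hUcl, hUW⟩ := key_mem (hM 0 1) (hM 0 2) hcon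
      refine ⟨U, hUcl, Or.inl ?_⟩
      rw [hUW]
      ext i j
      fin_cases i <;> fin_cases j <;>
        simp [Nmat, ha, hD, hE, hF, h10, h20, h21, Matrix.vecHead, Matrix.vecTail]
    · -- M 1 1 = -1
      have hE : M 1 2 = (starRingEnd ℂ) (M 0 1) := by
        rw [hD, hF, cm1] at e12
        linear_combination -e12
      have hcon : M 0 2 + (starRingEnd ℂ) (M 0 2)
          = -(M 0 1 * (starRingEnd ℂ) (M 0 1)) := by
        rw [hF, hE, c1] at e22
        simp only [Complex.conj_conj, one_mul, mul_one] at e22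
        linear_combination e22
      obtain ⟨U, hUcl, hUW⟩ := Mset_mul Mset_R₁ (key_mem (hM 0 1) (hM 0 2) hcon)
      refine ⟨U, hUcl, Or.inl ?_⟩
      rw [hUW]
      ext i j
      fin_cases i <;> fin_cases j <;>
        simp [R₁, Nmat, Matrix.mul_apply, Fin.sum_univ_three, ha, hD, hE, hF,
          h10, h20, h21, Matrix.vecHead, Matrix.vecTail]
  · -- M 0 0 = -1, M 2 2 = -1
    have h21 : M 2 1 = 0 := by
      rcases e01 with h | h
      · rw [ha] at h; exact absurd h (by norm_num)
      · exact h
    rw [h21] at e11 e12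
    simp only [_root_.map_zero, mul_zero, zero_mul, add_zero, zero_add] at e11 e12
    rcases O11_unit (hM 1 1) (hM 1 1) e11 with ⟨hD, -⟩ | ⟨hD, -⟩
    · -- M 1 1 = 1
      have hE : M 1 2 = (starRingEnd ℂ) (M 0 1) := by
        rw [hD, hF, c1] at e12
        linear_combination e12
      have hcon : (-(M 0 2)) + (starRingEnd ℂ) (-(M 0 2))
          = -((-(M 0 1)) * (starRingEnd ℂ) (-(M 0 1))) := by
        simp only [map_neg]
        rw [hF, hE, cm1] at e22
        simp only [Complex.conj_conj, neg_mul, mul_neg, neg_neg, one_mul, mul_one] at e22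
        linear_combination e22
      obtain ⟨U, hUcl, hUW⟩ :=
        Mset_mul Mset_R₁ (key_mem (O11_neg (hM 0 1)) (O11_neg (hM 0 2)) hcon)
      refine ⟨U, hUcl, Or.inr ?_⟩
      rw [hUW]
      ext i j
      fin_cases i <;> fin_cases j <;>
        simp [R₁, Nmat, Matrix.mul_apply, Fin.sum_univ_three, ha, hD, hE, hF,
          h10, h20, h21, map_neg, Complex.conj_conj,
          Matrix.vecHead, Matrix.vecTail]
    · -- M 1 1 = -1
      have hE : M 1 2 = -(starRingEnd ℂ) (M 0 1) := by
        rw [hD, hF, cm1] at e12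
        linear_combination -e12
      have hcon : (-(M 0 2)) + (starRingEnd ℂ) (-(M 0 2))
          = -((-(M 0 1)) * (starRingEnd ℂ) (-(M 0 1))) := by
        simp only [map_neg]
        rw [hF, hE, cm1] at e22
        simp only [map_neg, Complex.conj_conj, neg_mul, mul_neg, neg_neg, one_mul,
          mul_one] at e22
        linear_combination e22
      obtain ⟨U, hUcl, hUW⟩ := key_mem (O11_neg (hM 0 1)) (O11_neg (hM 0 2)) hcon
      refine ⟨U, hUcl, Or.inr ?_⟩
      rw [hUW]
      ext i j
      fin_cases i <;> fin_cases j <;>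
        simp [Nmat, ha, hD, hE, hF, h10, h20, h21, map_neg, Complex.conj_conj,
          Matrix.vecHead, Matrix.vecTail]

end
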